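/- If for some nonzero linear functional a on ℝⁿ and constant c we have ⟨a, pᵢ⟩ = c for all i = 1,…,m, then for all λ₁,…,λ_m ≥ 0 the Minkowski sum λ₁Δ(p₁) + ⋯ + λ_mΔ(p_m) has m-dimensional Lebesgue measure zero, where Δ(p) = conv{(p,0), e_{n+1},…,e_m} ⊂ ℝ^m. -/

import Mathlib

open MeasureTheory Pointwise

noncomputable def mixedVol {E : Type*} [AddCommMonoid E] [MeasureSpace E]
    (m : ℕ) (K : Fin m → Set E) : ℝ :=
  ∑ S : Finset (Fin m), (-1 : ℝ) ^ (m - S.card) * (volume (∑ i ∈ S, K i)).toReal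

noncomputable def emb (n m : ℕ) (p : EuclideanSpace ℝ (Fin n)) : EuclideanSpace ℝ (Fin m) :=
  WithLp.toLp 2 (fun (i : Fin m) => if h : (i : ℕ) < n then p ⟨i, h⟩ else 0)

noncomputable def simplexOf (n m : ℕ) (p : EuclideanSpace ℝ (Fin n)) :
    Set (EuclideanSpace ℝ (Fin m)) :=
  convexHull ℝ (insert (emb n m p)
    {x | ∃ j : Fin m, n ≤ (j : ℕ) ∧ x = EuclideanSpace.single j 1})

open scoped RealInnerProductSpace in
theorem stmt5 (n m : ℕ) (hn : 0 < n) (hm : n < m)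
    (p : Fin m → EuclideanSpace ℝ (Fin n))
    (a : EuclideanSpace ℝ (Fin n)) (ha : a ≠ 0) (c : ℝ)
    (hpc : ∀ i, ⟪a, p i⟫ = c)
    (lam : Fin m → ℝ) (hlam : ∀ i, 0 ≤ lam i) :
    volume (∑ i : Fin m, lam i • simplexOf n m (p i)) = 0 := by
  classical
  -- the vector defining the hyperplane
  set b : EuclideanSpace ℝ (Fin m) :=
    WithLp.toLp 2 (fun (j : Fin m) => if h : (j : ℕ) < n then a ⟨j, h⟩ else c) with hb
  have hbne : b ≠ 0 := by
    obtain ⟨i, hi⟩ : ∃ i : Fin n, a i ≠ 0 := by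
      by_contra h
      push_neg at h
      exact ha (PiLp.ext h)
    intro h
    have : b ⟨(i : ℕ), lt_trans i.isLt hm⟩ = 0 := by rw [h]; rfl
    rw [hb] at this
    simp only [Fin.isLt, dite_eq_ite] at this
    simp only [i.isLt, dif_pos] at this
    exact hi this
  -- each simplex lies in a hyperplane ⟪b, x⟫ = c
  have hsimplex : ∀ i : Fin m, simplexOf n m (p i) ⊆ {x | ⟪b, x⟫ = c} := by
    intro i
    have hconv : Convex ℝ {x : EuclideanSpace ℝ (Fin m) | ⟪b, x⟫ = c} :=
      convex_hyperplane ⟨fun x y => inner_add_right b x y,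
        fun r x => real_inner_smul_right b x r⟩ c
    apply convexHull_min _ hconv
    rintro x (rfl | ⟨j, hj, rfl⟩)
    · show ⟪b, emb n m (p i)⟫ = c
      rw [PiLp.inner_apply]
      have : ∀ j : Fin m, ⟪b j, emb n m (p i) j⟫ =
          if h : (j : ℕ) < n then a ⟨j, h⟩ * p i ⟨j, h⟩ else 0 := by
        intro j
        simp only [hb, emb, RCLike.inner_apply, conj_trivial]
        split <;> simp [mul_comm]
      rw [Finset.sum_congr rfl fun j _ => this j]
      rw [← hpc i, PiLp.inner_apply]
      simp only [RCLike.inner_apply, conj_trivial, mul_comm ((p i).ofLp _)]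
      set F : ℕ → ℝ := fun k => if h : k < n then a ⟨k, h⟩ * p i ⟨k, h⟩ else 0 with hF
      have h1 : ∑ j : Fin m, (if h : (j : ℕ) < n then a ⟨j, h⟩ * p i ⟨j, h⟩ else 0)
          = ∑ k ∈ Finset.range m, F k := Fin.sum_univ_eq_sum_range F m
      have h2 : ∑ k ∈ Finset.range n, F k = ∑ j : Fin n, a j * p i j := by
        rw [← Fin.sum_univ_eq_sum_range F n]
        refine Finset.sum_congr rfl fun j _ => ?_
        simp [hF, j.isLt]
      rw [h1, ← h2]
      exact (Finset.sum_subset (Finset.range_subset_range.mpr hm.le)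
        (fun k _ hk => by simp [hF, Finset.mem_range.not.mp hk])).symm
    · show ⟪b, EuclideanSpace.single j 1⟫ = c
      rw [EuclideanSpace.inner_single_right]
      simp [hb, Nat.not_lt.mpr hj]
  -- the Minkowski sum lies in a hyperplane
  have hsum : (∑ i : Fin m, lam i • simplexOf n m (p i)) ⊆
      {x | ⟪b, x⟫ = (∑ i : Fin m, lam i) * c} := by
    intro x hx
    rw [Set.mem_finset_sum] at hx
    obtain ⟨g, hg, rfl⟩ := hx
    have : ∀ i : Fin m, ⟪b, g i⟫ = lam i * c := by
      intro i
      obtain ⟨y, hy, hyg⟩ := hg (Finset.mem_univ i)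
      rw [← hyg]
      show ⟪b, lam i • y⟫ = _
      rw [real_inner_smul_right, hsimplex i hy]
    simp only [Set.mem_setOf_eq, inner_sum]
    rw [Finset.sum_congr rfl fun i _ => this i, ← Finset.sum_mul]
  refine measure_mono_null hsum ?_
  -- the hyperplane has measure zero
  set t := (∑ i : Fin m, lam i) * c
  set x₀ : EuclideanSpace ℝ (Fin m) := (t / ⟪b, b⟫) • b with hx₀
  have hbb : ⟪b, b⟫ ≠ 0 := fun h => hbne (inner_self_eq_zero.mp h)
  have hx₀t : ⟪b, x₀⟫ = t := by
    rw [hx₀, real_inner_smul_right, div_mul_cancel₀ _ hbb]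
  have hset : {x : EuclideanSpace ℝ (Fin m) | ⟪b, x⟫ = t} =
      (fun y => x₀ + y) '' ((LinearMap.ker (innerSL ℝ b).toLinearMap : Submodule ℝ _) :
        Set (EuclideanSpace ℝ (Fin m))) := by
    ext x
    constructor
    · intro hx
      refine ⟨x - x₀, ?_, by module⟩
      simp only [SetLike.mem_coe, LinearMap.mem_ker, ContinuousLinearMap.coe_coe, innerSL_apply_apply]
      rw [inner_sub_right, hx, hx₀t, sub_self]
    · rintro ⟨y, hy, rfl⟩
      simp only [SetLike.mem_coe, LinearMap.mem_ker, ContinuousLinearMap.coe_coe,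
        innerSL_apply_apply] at hy
      simp only [Set.mem_setOf_eq, inner_add_right, hx₀t, hy, add_zero]
  rw [hset, Set.image_add_left, measure_preimage_add]
  apply Measure.addHaar_submodule
  intro h
  have : b ∈ LinearMap.ker (innerSL ℝ b).toLinearMap := h ▸ Submodule.mem_top
  simp only [LinearMap.mem_ker, ContinuousLinearMap.coe_coe, innerSL_apply_apply] at this
  exact hbb this
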